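/- arXiv:2201.10461 — 2 statements merged into one kernel-verified Lean document; each statement's English description precedes it below -/
import Mathlib

section
/- For a complex number h_j, the entire function λ ↦ φ_j(π,λ) has only simple zeros if and only if h_j ∉ Z_h. -/
open MeasureTheory Filter Set
open scoped Classical

noncomputable section

/-- Lebesgue measure on `(0, π)`. -/
def mu0 : Measure ℝ := volume.restrict (Set.Ioo (0:ℝ) Real.pi)

/-- A chosen complex square root. -/
def csqrt (l : ℂ) : ℂ := l ^ ((1:ℂ)/2)

/-- `φ(h; λ; x) = cos(√λ x) + h·sin(√λ x)/√λ`, an entire function of `λ`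
(the case `λ = 0` is filled in with the limiting value `1 + h x`). -/
def phi (h l : ℂ) (x : ℝ) : ℂ :=
  if l = 0 then 1 + h * (x:ℂ)
  else Complex.cos (csqrt l * (x:ℂ)) + h * Complex.sin (csqrt l * (x:ℂ)) / csqrt l

/-- `∂φ/∂x`. -/
def phiX (h l : ℂ) (x : ℝ) : ℂ := deriv (fun t : ℝ => phi h l t) x

/-- `∂φ/∂λ`. -/
def phiL (h : ℂ) (x : ℝ) (l : ℂ) : ℂ := deriv (fun u : ℂ => phi h u x) l

/-- The characteristic function `Δ(λ)`. -/
def charFn {m : ℕ} (h : Fin m → ℂ) (p : Fin m → ℝ → ℂ) (l : ℂ) : ℂ :=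
  ∑ j : Fin m, (phiX (h j) l Real.pi + ∫ x in (0:ℝ)..Real.pi, p j x * phi (h j) l x) *
    ∏ s ∈ Finset.univ.erase j, phi (h s) l Real.pi

/-- `f` has a zero of multiplicity exactly `d` at `w`. -/
def ZeroMult (f : ℂ → ℂ) (w : ℂ) (d : ℕ) : Prop :=
  ∃ g : ℂ → ℂ, AnalyticAt ℂ g w ∧ g w ≠ 0 ∧ ∀ᶠ u in nhds w, f u = (u - w) ^ d * g u

/-- `h ∈ ℂ^m_*`: `z 0` is `z₁ = (1/m)∑ hⱼ`, the `z k, k ≠ 0` are the roots of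
`P(z) = d/dz ∏ (z - hⱼ)`, and the `2m-1` numbers `h₁,…,h_m,z₂,…,z_m` are pairwise distinct. -/
def CmStar {m : ℕ} [NeZero m] (h z : Fin m → ℂ) : Prop :=
  z 0 = (∑ j, h j) / (m : ℂ) ∧
  (∀ k : Fin m, k ≠ 0 →
    (Polynomial.derivative (∏ j : Fin m, (Polynomial.X - Polynomial.C (h j)))).eval (z k) = 0) ∧
  Function.Injective h ∧
  Set.InjOn z {k : Fin m | k ≠ 0} ∧
  ∀ j k : Fin m, k ≠ 0 → h j ≠ z k

/-- The asymptotics (*) for a family `{λ_{nk}}`. -/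
def SatAsymp {m : ℕ} [NeZero m] (z : Fin m → ℂ) (Λ : ℕ → Fin m → ℂ) : Prop :=
  ∃ ρ κ : ℕ → Fin m → ℂ,
    Summable (fun q : ℕ × Fin m => ‖κ q.1 q.2‖ ^ 2) ∧
    (∀ n k, (ρ n k) ^ 2 = Λ n k) ∧
    ∀ n : ℕ, 1 ≤ n →
      (ρ n 0 = (n:ℂ) + z 0 / ((Real.pi : ℂ) * n) + κ n 0 / n) ∧
      ∀ k : Fin m, k ≠ 0 →
        ρ n k = (n:ℂ) + 1/2 + z k / ((Real.pi : ℂ) * ((n:ℂ) + 1/2)) + κ n k / (n:ℂ) ^ 2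

/-- The set `Z_h`. -/
def Zh : Set ℂ :=
  { w | ∃ r : ℂ, r ≠ 0 ∧ Complex.sin r = r ∧
        w = -r / (2 * (Real.pi : ℂ)) * (Complex.cos (r/2) / Complex.sin (r/2)) }


-- ===================== auxiliary lemmas =====================

/-- quartic Taylor bounds for `exp (± z * I)`. -/
lemma taylor_core {z : ℂ} (hz : ‖z‖ ≤ 1) :
    ‖Complex.exp (z * Complex.I) - (1 + z * Complex.I - z^2/2 - z^3 * Complex.I / 6)‖
      ≤ ‖z‖ ^ 4 * (5/96) ∧
    ‖Complex.exp (-(z * Complex.I)) - (1 - z * Complex.I - z^2/2 + z^3 * Complex.I / 6)‖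
      ≤ ‖z‖ ^ 4 * (5/96) := by
  have habs : ‖z * Complex.I‖ = ‖z‖ := by
    rw [norm_mul, Complex.norm_I, mul_one]
  have hiz : ‖z * Complex.I‖ ≤ 1 := by rwa [habs]
  have hiz' : ‖-(z * Complex.I)‖ ≤ 1 := by rwa [norm_neg, habs]
  have b1 := Complex.exp_bound hiz (by norm_num : 0 < 4)
  have b2 := Complex.exp_bound hiz' (by norm_num : 0 < 4)
  have e1 : ∑ m ∈ Finset.range 4, (z * Complex.I) ^ m / m.factorial
      = 1 + z * Complex.I - z^2/2 - z^3 * Complex.I / 6 := by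
    simp [Finset.sum_range_succ, Nat.factorial]
    linear_combination (z^2/2 + z^3*Complex.I/6) * Complex.I_sq
  have e2 : ∑ m ∈ Finset.range 4, (-(z * Complex.I)) ^ m / m.factorial
      = 1 - z * Complex.I - z^2/2 + z^3 * Complex.I / 6 := by
    simp [Finset.sum_range_succ, Nat.factorial]
    linear_combination (z^2/2 - z^3*Complex.I/6) * Complex.I_sq
  rw [e1, habs] at b1
  rw [e2, norm_neg, habs] at b2
  constructor
  · refine b1.trans_eq ?_
    norm_num [Nat.factorial]
  · refine b2.trans_eq ?_
    norm_num [Nat.factorial]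

lemma cos_taylor {z : ℂ} (hz : ‖z‖ ≤ 1) :
    ‖Complex.cos z - 1 + z ^ 2 / 2‖ ≤ ‖z‖ ^ 4 := by
  obtain ⟨b1, b2⟩ := taylor_core hz
  have hcos : Complex.cos z - 1 + z ^ 2 / 2 =
      ((Complex.exp (z * Complex.I) - (1 + z * Complex.I - z^2/2 - z^3 * Complex.I / 6))
      + (Complex.exp (-(z * Complex.I)) - (1 - z * Complex.I - z^2/2 + z^3 * Complex.I / 6))) / 2 := by
    rw [Complex.cos]; ring
  rw [hcos, norm_div, Complex.norm_two]
  have htri := norm_add_le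
    (Complex.exp (z * Complex.I) - (1 + z * Complex.I - z^2/2 - z^3 * Complex.I / 6))
    (Complex.exp (-(z * Complex.I)) - (1 - z * Complex.I - z^2/2 + z^3 * Complex.I / 6))
  have h4 : (0:ℝ) ≤ ‖z‖ ^ 4 := by positivity
  linarith

lemma sin_taylor {z : ℂ} (hz : ‖z‖ ≤ 1) :
    ‖Complex.sin z - z + z ^ 3 / 6‖ ≤ ‖z‖ ^ 4 := by
  obtain ⟨b1, b2⟩ := taylor_core hz
  have hsin : Complex.sin z - z + z ^ 3 / 6 =
      ((Complex.exp (-(z * Complex.I)) - (1 - z * Complex.I - z^2/2 + z^3 * Complex.I / 6))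
      - (Complex.exp (z * Complex.I) - (1 + z * Complex.I - z^2/2 - z^3 * Complex.I / 6))) * Complex.I / 2 := by
    rw [Complex.sin, neg_mul]
    linear_combination (z^3/6 - z) * Complex.I_sq
  rw [hsin, norm_div, norm_mul, Complex.norm_I, mul_one, Complex.norm_two]
  have htri := norm_sub_le
    (Complex.exp (-(z * Complex.I)) - (1 - z * Complex.I - z^2/2 + z^3 * Complex.I / 6))
    (Complex.exp (z * Complex.I) - (1 + z * Complex.I - z^2/2 - z^3 * Complex.I / 6))
  have h4 : (0:ℝ) ≤ ‖z‖ ^ 4 := by positivity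
  linarith

lemma csqrt_sq {l : ℂ} (hl : l ≠ 0) : csqrt l ^ 2 = l := by
  rw [csqrt, sq, ← Complex.cpow_add _ _ hl]; norm_num

lemma phi_eval {h l : ℂ} (hl : l ≠ 0) {w : ℂ} (hw : w ^ 2 = l) :
    phi h l Real.pi = Complex.cos (w * (Real.pi:ℂ)) +
      h * Complex.sin (w * (Real.pi:ℂ)) / w := by
  have hs : csqrt l ^ 2 = w ^ 2 := (csqrt_sq hl).trans hw.symm
  have hfac : (csqrt l - w) * (csqrt l + w) = 0 := by linear_combination hs
  rcases mul_eq_zero.1 hfac with h1 | h1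
  · have hcw : csqrt l = w := sub_eq_zero.1 h1
    rw [phi, if_neg hl, hcw]
  · have hcw : csqrt l = -w := by linear_combination h1
    rw [phi, if_neg hl, hcw]
    rw [neg_mul, Complex.cos_neg, Complex.sin_neg]
    ring

lemma hasDerivAt_phi_zero (h : ℂ) :
    HasDerivAt (fun u : ℂ => phi h u Real.pi)
      (-(Real.pi:ℂ)^2/2 - h * (Real.pi:ℂ)^3/6) 0 := by
  set d : ℂ := -(Real.pi:ℂ)^2/2 - h * (Real.pi:ℂ)^3/6 with hd
  rw [hasDerivAt_iff_isLittleO_nhds_zero]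
  rw [Asymptotics.isLittleO_iff]
  intro c hc
  have hπ : (0:ℝ) < Real.pi := Real.pi_pos
  set δ : ℝ := min (1/(Real.pi+1)) (c/((Real.pi^4+1)*(1+‖h‖))) with hδdef
  have hδpos : 0 < δ := by
    apply lt_min
    · positivity
    · positivity
  rw [Metric.eventually_nhds_iff]
  refine ⟨δ^2, by positivity, ?_⟩
  intro u hu
  simp only [dist_zero_right] at hu
  rcases eq_or_ne u 0 with rfl | hu0
  · simp [phi]
  · have hph0 : phi h 0 Real.pi = 1 + h * (Real.pi:ℂ) := by simp [phi]
    set s : ℂ := csqrt u with hsdef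
    have hs2 : s ^ 2 = u := csqrt_sq hu0
    have hs0 : s ≠ 0 := by
      intro hs; rw [hs] at hs2; simp at hs2; exact hu0 hs2.symm
    have hnorm : ‖s‖ ^ 2 = ‖u‖ := by
      rw [← norm_pow, hs2]
    have hsδ : ‖s‖ < δ := by
      have : ‖s‖ ^ 2 < δ ^ 2 := by rw [hnorm]; simpa using hu
      nlinarith [norm_nonneg s]
    have hδ1 : δ ≤ 1/(Real.pi+1) := min_le_left _ _
    have hδc : δ ≤ c/((Real.pi^4+1)*(1+‖h‖)) := min_le_right _ _
    have hsπ1 : ‖s * (Real.pi:ℂ)‖ ≤ 1 := by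
      rw [norm_mul, Complex.norm_real, Real.norm_eq_abs, abs_of_pos hπ]
      have : ‖s‖ * Real.pi < δ * (Real.pi + 1) := by
        nlinarith [norm_nonneg s]
      have h2 : δ * (Real.pi + 1) ≤ 1 := by
        rw [← le_div_iff₀ (by positivity)] at *; exact hδ1
      linarith
    -- the key identity
    have hkey : phi h u Real.pi - (1 + h * (Real.pi:ℂ)) - u * d =
        (Complex.cos (s * (Real.pi:ℂ)) - 1 + (s * (Real.pi:ℂ))^2/2)
        + (h/s) * (Complex.sin (s*(Real.pi:ℂ)) - s*(Real.pi:ℂ) + (s*(Real.pi:ℂ))^3/6) := by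
      rw [phi, if_neg hu0, ← hsdef, hd, ← hs2]
      field_simp
      ring
    rw [zero_add, hph0, smul_eq_mul, hkey]
    -- bound
    have bc := cos_taylor hsπ1
    have bs := sin_taylor hsπ1
    have habs : ‖s * (Real.pi:ℂ)‖ = ‖s‖ * Real.pi := by
      rw [norm_mul, Complex.norm_real, Real.norm_eq_abs, abs_of_pos hπ]
    rw [habs] at bc bs
    have tri := norm_add_le
      (Complex.cos (s * (Real.pi:ℂ)) - 1 + (s * (Real.pi:ℂ))^2/2)
      ((h/s) * (Complex.sin (s*(Real.pi:ℂ)) - s*(Real.pi:ℂ) + (s*(Real.pi:ℂ))^3/6))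
    have hB : ‖(h/s) * (Complex.sin (s*(Real.pi:ℂ)) - s*(Real.pi:ℂ) + (s*(Real.pi:ℂ))^3/6)‖
        ≤ ‖h‖ / ‖s‖ * ((‖s‖ * Real.pi)^4) := by
      rw [norm_mul, norm_div]
      gcongr
    have hsne : (0:ℝ) < ‖s‖ := by
      simpa [norm_pos_iff] using hs0
    have hBs : ‖h‖ / ‖s‖ * ((‖s‖ * Real.pi)^4)
        = ‖h‖ * Real.pi^4 * ‖s‖ ^3 := by
      field_simp
    have hnu : ‖u‖ = ‖s‖ ^ 2 := by rw [← hnorm]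
    rw [hnu]
    have goalb : (‖s‖ * Real.pi)^4 + ‖h‖ * Real.pi^4 * ‖s‖^3
        ≤ c * ‖s‖ ^ 2 := by
      have e1 : (‖s‖ * Real.pi)^4 + ‖h‖ * Real.pi^4 * ‖s‖^3
          = ‖s‖^2 * (Real.pi^4 * (‖s‖^2 + ‖h‖ * ‖s‖)) := by ring
      rw [e1]
      have h2 : Real.pi^4 * (‖s‖^2 + ‖h‖ * ‖s‖) ≤ c := by
        have hδ' : δ ≤ 1 := by
          have : (1:ℝ)/(Real.pi+1) ≤ 1 := by
            rw [div_le_one (by positivity)]; linarith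
          linarith
        have hs1 : ‖s‖ ≤ 1 := by linarith
        have hs2' : ‖s‖ ^ 2 + ‖h‖ * ‖s‖ ≤ δ * (1 + ‖h‖) := by
          nlinarith [norm_nonneg s, norm_nonneg h]
        have hc' : δ * ((Real.pi^4+1)*(1 + ‖h‖)) ≤ c := by
          rwa [le_div_iff₀ (by positivity)] at hδc
        have he : δ * ((Real.pi^4+1)*(1 + ‖h‖))
            = Real.pi^4*(δ*(1 + ‖h‖)) + δ*(1 + ‖h‖) := by ring
        rw [he] at hc'
        have t2 : Real.pi^4 * (δ * (1 + ‖h‖)) ≤ c := by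
          have := mul_nonneg hδpos.le (show (0:ℝ) ≤ 1 + ‖h‖ by positivity)
          linarith
        calc Real.pi^4 * (‖s‖^2 + ‖h‖ * ‖s‖)
            ≤ Real.pi^4 * (δ * (1 + ‖h‖)) := by
              apply mul_le_mul_of_nonneg_left hs2' (by positivity)
          _ ≤ c := t2
      exact (mul_le_mul_of_nonneg_left h2 (by positivity)).trans_eq (mul_comm _ c)
    exact le_trans (le_trans tri (add_le_add bc (hB.trans (le_of_eq hBs)))) goalb

/-- Derivative of `phi` in `λ` at a nonzero point, expressed via any square root `w` of `l`. -/
lemma hasDerivAt_phi_ne (h : ℂ) {l w : ℂ} (hl : l ≠ 0) (hw : w ^ 2 = l) :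
    HasDerivAt (fun u : ℂ => phi h u Real.pi)
      ((-Complex.sin (w * (Real.pi:ℂ)) * (Real.pi:ℂ)
        + h * ((Complex.cos (w * (Real.pi:ℂ)) * (Real.pi:ℂ) * w
              - Complex.sin (w * (Real.pi:ℂ))) / w ^ 2)) * (1 / (2 * w))) l := by
  have hw0 : w ≠ 0 := by
    intro h0; rw [h0] at hw; simp at hw; exact hl hw.symm
  have hbl : w * Complex.exp (Complex.log (l / l) / 2) = w := by
    simp [div_self hl, Complex.log_one]
  -- derivative of the branch b u = w * exp (log (u/l) / 2)
  have hb : HasDerivAt (fun u : ℂ => w * Complex.exp (Complex.log (u / l) / 2)) (1 / (2 * w)) l := by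
    have h1 : HasDerivAt (fun u : ℂ => u / l) (1 / l) l := by
      simpa using (hasDerivAt_id l).div_const l
    have h3 : HasDerivAt (fun u : ℂ => Complex.log (u / l)) ((1 / l) / (l / l)) l :=
      h1.clog (by rw [div_self hl]; exact Complex.one_mem_slitPlane)
    have h4 := (h3.div_const 2).cexp.const_mul w
    have e : w * (Complex.exp (Complex.log (l / l) / 2) * (1 / l / (l / l) / 2)) = 1 / (2 * w) := by
      rw [div_self hl, Complex.log_one]
      simp only [zero_div, Complex.exp_zero, div_one]
      rw [← hw]
      field_simp
    rw [← e]
    exact h4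
  -- b u is a square root of u for u ≠ 0
  have hbsq : ∀ u : ℂ, u ≠ 0 → (w * Complex.exp (Complex.log (u / l) / 2)) ^ 2 = u := by
    intro u hu
    have h2 : Complex.exp (Complex.log (u / l) / 2) ^ 2 = u / l := by
      rw [← Complex.exp_nat_mul]
      have e2 : ((2:ℕ):ℂ) * (Complex.log (u / l) / 2) = Complex.log (u / l) := by
        push_cast; ring
      rw [e2, Complex.exp_log (div_ne_zero hu hl)]
    rw [mul_pow, h2, hw]
    field_simp
  -- G and its derivative at w
  have hG : HasDerivAt (fun v : ℂ => Complex.cos (v * (Real.pi:ℂ)) + h * Complex.sin (v * (Real.pi:ℂ)) / v)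
      (-Complex.sin (w * (Real.pi:ℂ)) * (Real.pi:ℂ)
        + h * ((Complex.cos (w * (Real.pi:ℂ)) * (Real.pi:ℂ) * w
              - Complex.sin (w * (Real.pi:ℂ))) / w ^ 2)) w := by
    have hm : HasDerivAt (fun v : ℂ => v * (Real.pi:ℂ)) (Real.pi:ℂ) w := by
      simpa using (hasDerivAt_id w).mul_const ((Real.pi:ℂ))
    have hsin := hm.csin
    have hid : HasDerivAt (fun v : ℂ => v) 1 w := hasDerivAt_id w
    have hq : HasDerivAt (fun v : ℂ => Complex.sin (v * (Real.pi:ℂ)) / v)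
        ((Complex.cos (w * (Real.pi:ℂ)) * (Real.pi:ℂ) * w - Complex.sin (w * (Real.pi:ℂ)) * 1) / w ^ 2) w :=
      hsin.div hid hw0
    have htot := hm.ccos.add (hq.const_mul h)
    have hfe : (fun v : ℂ => Complex.cos (v * (Real.pi:ℂ)) + h * Complex.sin (v * (Real.pi:ℂ)) / v)
        = fun v : ℂ => Complex.cos (v * (Real.pi:ℂ)) + h * (Complex.sin (v * (Real.pi:ℂ)) / v) := by
      funext v; rw [mul_div_assoc]
    rw [hfe]
    simp only [mul_one] at htot; exact htot
  -- chain rule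
  have hGb : HasDerivAt (fun v : ℂ => Complex.cos (v * (Real.pi:ℂ)) + h * Complex.sin (v * (Real.pi:ℂ)) / v)
      (-Complex.sin (w * (Real.pi:ℂ)) * (Real.pi:ℂ)
        + h * ((Complex.cos (w * (Real.pi:ℂ)) * (Real.pi:ℂ) * w
              - Complex.sin (w * (Real.pi:ℂ))) / w ^ 2)) (w * Complex.exp (Complex.log (l / l) / 2)) := by
    rw [hbl]; exact hG
  have hcomp := hGb.comp l hb
  -- phi agrees with G ∘ b near l
  have heq : (fun u : ℂ => phi h u Real.pi) =ᶠ[nhds l]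
      (fun v : ℂ => Complex.cos (v * (Real.pi:ℂ)) + h * Complex.sin (v * (Real.pi:ℂ)) / v)
        ∘ (fun u : ℂ => w * Complex.exp (Complex.log (u / l) / 2)) := by
    have hne : {u : ℂ | u ≠ 0} ∈ nhds l := isOpen_ne.mem_nhds hl
    filter_upwards [hne] with u hu
    exact phi_eval hu (hbsq u hu)
  exact hcomp.congr_of_eventuallyEq heq

/-- abstract algebra: numerator of the λ-derivative vanishes at a double zero. -/
lemma alg_num_zero {p s si co h : ℂ} (hs : s ≠ 0) (hsi : si ≠ 0)
    (hpyth : si^2 + co^2 = 1) (hz : s * co + h * si = 0) (hkey : si * co = p * s) :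
    -si * p + h * ((co * p * s - si) / s ^ 2) = 0 := by
  have hG : -si * p * s^2 + h * (co * p * s - si) = 0 := by
    have hmul : si * (-si * p * s^2 + h * (co * p * s - si)) = 0 := by
      linear_combination (co*p*s - si) * hz + (-(p*s^2)) * hpyth + s * hkey
    exact (mul_eq_zero.mp hmul).resolve_left hsi
  have e : -si * p + h * ((co * p * s - si) / s ^ 2)
      = (-si * p * s^2 + h * (co * p * s - si)) / s ^ 2 := by
    field_simp
  rw [e, hG, zero_div]

/-- abstract algebra: a double zero forces `si·co = p·s`. -/
lemma alg_key {p s si co h : ℂ} (hs : s ≠ 0) (hsi : si ≠ 0)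
    (hpyth : si^2 + co^2 = 1) (hz : s * co + h * si = 0)
    (hnum : -si * p * s^2 + h * (co * p * s - si) = 0) :
    si * co = p * s := by
  have hmul : s * (si * co - p * s) = 0 := by
    linear_combination si * hnum - (co*p*s - si) * hz + p*s^2 * hpyth
  have hres := (mul_eq_zero.mp hmul).resolve_left hs
  linear_combination hres


/-- the entire function `λ ↦ φⱼ(π,λ)` has only simple zeros if and only if
`hⱼ ∉ Z_h`. (A zero `l` is simple iff the derivative does not vanish there.) -/
theorem statement3 (h : ℂ) :
    (∀ l : ℂ, phi h l Real.pi = 0 → deriv (fun u : ℂ => phi h u Real.pi) l ≠ 0) ↔ h ∉ Zh := by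
  have hπ0 : (Real.pi:ℂ) ≠ 0 := by exact_mod_cast Real.pi_ne_zero
  constructor
  · -- simple zeros → h ∉ Zh
    intro hsimple hmem
    obtain ⟨r, hr0, hsinr, hval⟩ := hmem
    obtain ⟨s, hsdef⟩ : ∃ s : ℂ, s = r / (2 * (Real.pi:ℂ)) := ⟨_, rfl⟩
    have hs0 : s ≠ 0 := by rw [hsdef]; exact div_ne_zero hr0 (by simp [hπ0])
    have hl0 : s ^ 2 ≠ 0 := pow_ne_zero 2 hs0
    have hr2 : r / 2 = s * (Real.pi:ℂ) := by rw [hsdef]; field_simp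
    have hrs : r = 2 * (Real.pi:ℂ) * s := by rw [hsdef]; field_simp
    have hsin2 : Complex.sin (s * (Real.pi:ℂ)) ≠ 0 := by
      rw [← hr2]
      intro hz
      apply hr0
      rw [← hsinr, show r = 2 * (r/2) by ring, Complex.sin_two_mul, hz]
      ring
    have hkey : Complex.sin (s * (Real.pi:ℂ)) * Complex.cos (s * (Real.pi:ℂ)) = (Real.pi:ℂ) * s := by
      have h2 : Complex.sin (2 * (s * (Real.pi:ℂ))) = 2 * (s * (Real.pi:ℂ)) := by
        rw [← hr2, show (2:ℂ) * (r/2) = r by ring, hsinr]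
      rw [Complex.sin_two_mul] at h2
      linear_combination h2 / 2
    have hh : s * Complex.cos (s * (Real.pi:ℂ)) + h * Complex.sin (s * (Real.pi:ℂ)) = 0 := by
      rw [hval, hr2, hrs]
      field_simp
      ring
    have hzero : phi h (s^2) Real.pi = 0 := by
      rw [phi_eval hl0 rfl]
      have e : Complex.cos (s * (Real.pi:ℂ)) + h * Complex.sin (s * (Real.pi:ℂ)) / s
          = (s * Complex.cos (s * (Real.pi:ℂ)) + h * Complex.sin (s * (Real.pi:ℂ))) / s := by
        field_simp
      rw [e, hh, zero_div]
    refine hsimple (s^2) hzero ?_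
    rw [(hasDerivAt_phi_ne h hl0 rfl).deriv]
    have hpyth := Complex.sin_sq_add_cos_sq (s * (Real.pi:ℂ))
    rw [alg_num_zero hs0 hsin2 hpyth hh hkey, zero_mul]
  · -- h ∉ Zh → simple zeros
    intro hnot l hzero
    rcases eq_or_ne l 0 with rfl | hl0
    · rw [(hasDerivAt_phi_zero h).deriv]
      have h1 : 1 + h * (Real.pi:ℂ) = 0 := by
        rw [phi] at hzero; simpa using hzero
      intro hd
      have hsq : (Real.pi:ℂ)^2 = 0 := by
        linear_combination (-3) * hd - (Real.pi:ℂ)^2/2 * h1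
      exact hπ0 (pow_eq_zero_iff (by norm_num)|>.mp hsq)
    · have hs2 : csqrt l ^ 2 = l := csqrt_sq hl0
      obtain ⟨s, hsdef⟩ : ∃ s : ℂ, s = csqrt l := ⟨_, rfl⟩
      rw [← hsdef] at hs2
      have hs0 : s ≠ 0 := by
        intro hs; rw [hs] at hs2; simp at hs2; exact hl0 hs2.symm
      rw [(hasDerivAt_phi_ne h hl0 hs2).deriv]
      intro hd
      rw [phi_eval hl0 hs2] at hzero
      have hz' : s * Complex.cos (s * (Real.pi:ℂ)) + h * Complex.sin (s * (Real.pi:ℂ)) = 0 := by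
        field_simp at hzero
        linear_combination hzero
      have hsin0 : Complex.sin (s * (Real.pi:ℂ)) ≠ 0 := by
        intro hz
        have hcos : Complex.cos (s * (Real.pi:ℂ)) = 0 := by
          rw [hz, mul_zero, add_zero] at hz'
          exact (mul_eq_zero.mp hz').resolve_left hs0
        have hp := Complex.sin_sq_add_cos_sq (s * (Real.pi:ℂ))
        rw [hz, hcos] at hp
        simp at hp
      have hnum : -Complex.sin (s * (Real.pi:ℂ)) * (Real.pi:ℂ) * s ^ 2
          + h * (Complex.cos (s * (Real.pi:ℂ)) * (Real.pi:ℂ) * s - Complex.sin (s * (Real.pi:ℂ))) = 0 := by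
        rw [mul_eq_zero] at hd
        rcases hd with hd | hd
        · have e : -Complex.sin (s * (Real.pi:ℂ)) * (Real.pi:ℂ)
              + h * ((Complex.cos (s * (Real.pi:ℂ)) * (Real.pi:ℂ) * s - Complex.sin (s * (Real.pi:ℂ))) / s ^ 2)
              = (-Complex.sin (s * (Real.pi:ℂ)) * (Real.pi:ℂ) * s ^ 2
          + h * (Complex.cos (s * (Real.pi:ℂ)) * (Real.pi:ℂ) * s - Complex.sin (s * (Real.pi:ℂ)))) / s ^ 2 := by
            field_simp
          rw [e, div_eq_zero_iff] at hd
          exact hd.resolve_right (pow_ne_zero 2 hs0)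
        · exfalso
          rw [div_eq_zero_iff] at hd
          rcases hd with hd | hd
          · exact one_ne_zero hd
          · exact (mul_ne_zero two_ne_zero hs0) hd
      have hpyth := Complex.sin_sq_add_cos_sq (s * (Real.pi:ℂ))
      have hkey := alg_key hs0 hsin0 hpyth hz' hnum
      apply hnot
      refine ⟨2 * (Real.pi:ℂ) * s, by simp [hπ0, hs0], ?_, ?_⟩
      · rw [show (2:ℂ) * (Real.pi:ℂ) * s = 2 * (s * (Real.pi:ℂ)) by ring, Complex.sin_two_mul]
        linear_combination 2 * hkey
      · rw [show (2:ℂ) * (Real.pi:ℂ) * s / 2 = s * (Real.pi:ℂ) by ring]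
        have e : -(2 * (Real.pi:ℂ) * s) / (2 * (Real.pi:ℂ)) = -s := by
          rw [neg_div, mul_div_cancel_left₀ _ (by simp [hπ0])]
        rw [e, eq_comm, mul_div_assoc', div_eq_iff hsin0]
        linear_combination -hz'
end
end

section
/- Let h_j and h_s be complex numbers with h_j ≠ h_s. Then the entire functions λ ↦ φ_j(π,λ) and λ ↦ φ_s(π,λ) have no common zeros. -/
open MeasureTheory Filter Set
open scoped Classical

noncomputable section

/-- if `hⱼ ≠ h_s`, the entire functions `λ ↦ φⱼ(π,λ)` and `λ ↦ φ_s(π,λ)`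
have no common zeros. -/
theorem statement18 (hj hs : ℂ) (hne : hj ≠ hs) :
    ∀ l : ℂ, ¬(phi hj l Real.pi = 0 ∧ phi hs l Real.pi = 0) := by
  rintro l ⟨h1, h2⟩
  by_cases hl : l = 0
  · subst hl
    simp only [phi, if_pos rfl] at h1 h2
    have hpi : (Real.pi : ℂ) ≠ 0 := by
      exact_mod_cast Complex.ofReal_ne_zero.2 Real.pi_ne_zero
    have := h1.trans h2.symm
    field_simp at this
    simp only [↓reduceIte] at this
    have h3 : (hj - hs) * (Real.pi : ℂ) = 0 := by linear_combination this
    exact hne (sub_eq_zero.1 ((mul_eq_zero.1 h3).resolve_right hpi))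
  · have hs0 : csqrt l ≠ 0 := by
      simp [csqrt, Complex.cpow_eq_zero_iff, hl]
    simp only [phi, if_neg hl] at h1 h2
    set r := csqrt l * (Real.pi : ℂ) with hr
    have hsin : Complex.sin r = 0 := by
      have hsub : (hj - hs) * Complex.sin r / csqrt l = 0 := by
        have := sub_eq_zero.2 (h1.trans h2.symm)
        ring_nf at this ⊢
        linear_combination this
      have := (div_eq_zero_iff.1 hsub).resolve_right hs0
      rcases mul_eq_zero.1 this with h | h
      · exact absurd (sub_eq_zero.1 h) hne
      · exact h
    have hcos : Complex.cos r = 0 := by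
      have : Complex.cos r + hj * Complex.sin r / csqrt l = 0 := h1
      rw [hsin] at this; simpa using this
    have := Complex.sin_sq_add_cos_sq r
    rw [hsin, hcos] at this
    simp at this
end
end
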